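/- For every integer c ≥ 1 there exists a permutation π such that every permutation that is a composition of at most c separable permutations avoids π as a pattern. -/

import Mathlib

/-- `π` is a pattern of `σ`: there is a strictly increasing map `f` such that the relative
order of values of `σ` on the image of `f` matches that of `π`. -/
def IsPattern {p m : ℕ} (π : Equiv.Perm (Fin p)) (σ : Equiv.Perm (Fin m)) : Prop :=
  ∃ f : Fin p → Fin m, StrictMono f ∧ ∀ i j : Fin p, π i < π j ↔ σ (f i) < σ (f j)

/-- The permutation 2413 (0-indexed values 1,3,0,2). -/
def perm2413 : Equiv.Perm (Fin 4) where
  toFun := ![1, 3, 0, 2]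
  invFun := ![2, 0, 3, 1]
  left_inv := by intro x; fin_cases x <;> rfl
  right_inv := by intro x; fin_cases x <;> rfl

/-- The permutation 3142 (0-indexed values 2,0,3,1). -/
def perm3142 : Equiv.Perm (Fin 4) where
  toFun := ![2, 0, 3, 1]
  invFun := ![1, 3, 0, 2]
  left_inv := by intro x; fin_cases x <;> rfl
  right_inv := by intro x; fin_cases x <;> rfl

/-- A permutation is separable iff it avoids both 2413 and 3142 as patterns. -/
def Separable {n : ℕ} (σ : Equiv.Perm (Fin n)) : Prop :=
  ¬ IsPattern perm2413 σ ∧ ¬ IsPattern perm3142 σ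

open Equiv Finset

lemma isPattern_trans {p q m : ℕ} {π : Perm (Fin p)} {ρ : Perm (Fin q)} {σ : Perm (Fin m)}
    (h1 : IsPattern π ρ) (h2 : IsPattern ρ σ) : IsPattern π σ := by
  obtain ⟨f, hf, hfo⟩ := h1
  obtain ⟨g, hg, hgo⟩ := h2
  exact ⟨g ∘ f, hg.comp hf, fun i j => (hfo i j).trans (hgo _ _)⟩

lemma separable_of_isPattern {q m : ℕ} {ρ : Perm (Fin q)} {τ : Perm (Fin m)}
    (hτ : Separable τ) (h : IsPattern ρ τ) : Separable ρ :=
  ⟨fun hp => hτ.1 (isPattern_trans hp h), fun hp => hτ.2 (isPattern_trans hp h)⟩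

/-- two permutations of `Fin p` with the same comparison relations are equal. -/
lemma perm_eq_of_cmp {p : ℕ} {ρ₁ ρ₂ : Perm (Fin p)}
    (h : ∀ i j, ρ₁ i < ρ₁ j ↔ ρ₂ i < ρ₂ j) : ρ₁ = ρ₂ := by
  have hsm : StrictMono (fun i => ρ₂ (ρ₁.symm i)) := by
    intro i j hij
    have := (h (ρ₁.symm i) (ρ₁.symm j)).mp (by simpa using hij)
    simpa using this
  have hid : (fun i => ρ₂ (ρ₁.symm i)) = id := by
    apply (hsm.range_inj strictMono_id).mp
    rw [Set.range_id]
    exact (ρ₂.surjective.comp ρ₁.symm.surjective).range_eq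
  ext x
  have := congrFun hid (ρ₁ x)
  simp at this
  rw [this]

lemma pattern_of_one {n : ℕ} {π : Perm (Fin 4)} (h : IsPattern π (1 : Perm (Fin n))) :
    π = 1 := by
  obtain ⟨f, hf, ho⟩ := h
  apply perm_eq_of_cmp
  intro i j
  rw [ho i j]
  simp [hf.lt_iff_lt]

lemma identity_separable {n : ℕ} : Separable (1 : Perm (Fin n)) := by
  constructor <;> intro h <;> have h1 := pattern_of_one h
  · have : perm2413 0 = (1 : Perm (Fin 4)) 0 := by rw [h1]
    simpa [perm2413] using this
  · have : perm3142 0 = (1 : Perm (Fin 4)) 0 := by rw [h1]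
    simpa [perm3142] using this

lemma pattern_of_one' {p n : ℕ} {π : Perm (Fin p)} (h : IsPattern π (1 : Perm (Fin n))) :
    π = 1 := by
  obtain ⟨f, hf, ho⟩ := h
  apply perm_eq_of_cmp
  intro i j
  rw [ho i j]
  simp [hf.lt_iff_lt]
lemma isPattern_mul_split {p n : ℕ} {π : Perm (Fin p)} {τ ρ : Perm (Fin n)}
    (h : IsPattern π (τ * ρ)) :
    ∃ π₁ π₂ : Perm (Fin p), π = π₁ * π₂ ∧ IsPattern π₁ τ ∧ IsPattern π₂ ρ := by
  obtain ⟨f, hf, ho⟩ := h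
  have hinj : Function.Injective (fun i => ρ (f i)) := fun a b hab => hf.injective (ρ.injective hab)
  set T : Finset (Fin n) := Finset.univ.image (fun i => ρ (f i)) with hTdef
  have hT : T.card = p := by
    rw [hTdef, Finset.card_image_of_injective _ hinj, Finset.card_univ, Fintype.card_fin]
  set e := T.orderIsoOfFin hT with he
  have hmem : ∀ i : Fin p, ρ (f i) ∈ T := fun i => Finset.mem_image_of_mem _ (Finset.mem_univ i)
  set g : Fin p → Fin p := fun i => e.symm ⟨ρ (f i), hmem i⟩ with hg
  have hginj : Function.Injective g := by
    intro a b hab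
    have := e.symm.injective hab
    exact hf.injective (ρ.injective (by simpa using this))
  have hgbij : Function.Bijective g := Finite.injective_iff_bijective.mp hginj
  set π₂ : Perm (Fin p) := Equiv.ofBijective g hgbij with hπ₂
  have hπ₂app : ∀ i, π₂ i = g i := fun i => rfl
  have hkey : ∀ a : Fin p, ((e (π₂ a) : { x // x ∈ T }) : Fin n) = ρ (f a) := by
    intro a
    rw [hπ₂app, hg]
    simp
  have h2 : IsPattern π₂ ρ := by
    refine ⟨f, hf, fun i j => ?_⟩
    rw [hπ₂app, hπ₂app, hg]
    simp only [OrderIso.lt_iff_lt e.symm]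
    exact Iff.rfl
  refine ⟨π * π₂⁻¹, π₂, by group, ?_, h2⟩
  refine ⟨fun i => (e i : Fin n), fun a b hab => by simpa using e.strictMono hab, ?_⟩
  intro i j
  have hei : ((e i : { x // x ∈ T }) : Fin n) = ρ (f (π₂⁻¹ i)) := by
    have := hkey (π₂⁻¹ i); rwa [show π₂ (π₂⁻¹ i) = i from π₂.apply_symm_apply i] at this
  have hej : ((e j : { x // x ∈ T }) : Fin n) = ρ (f (π₂⁻¹ j)) := by
    have := hkey (π₂⁻¹ j); rwa [show π₂ (π₂⁻¹ j) = j from π₂.apply_symm_apply j] at this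
  calc (π * π₂⁻¹) i < (π * π₂⁻¹) j ↔ π (π₂⁻¹ i) < π (π₂⁻¹ j) := Iff.rfl
    _ ↔ (τ * ρ) (f (π₂⁻¹ i)) < (τ * ρ) (f (π₂⁻¹ j)) := ho _ _
    _ ↔ τ (e i) < τ (e j) := by
        rw [Perm.mul_apply, Perm.mul_apply, hei, hej]

lemma list_pattern_split {p n : ℕ} {π : Perm (Fin p)} :
    ∀ (l : List (Perm (Fin n))), IsPattern π l.prod →
    ∃ l' : List (Perm (Fin p)), l'.length = l.length ∧ l'.prod = π ∧
      List.Forall₂ (fun a b => IsPattern a b) l' l := by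
  intro l
  induction l generalizing π with
  | nil =>
    intro h
    exact ⟨[], rfl, (pattern_of_one' (by simpa using h)).symm, List.Forall₂.nil⟩
  | cons τ l ih =>
    intro h
    rw [List.prod_cons] at h
    obtain ⟨π₁, π₂, hsplit, h1, h2⟩ := isPattern_mul_split h
    obtain ⟨l', hlen, hprod, hfa⟩ := ih h2
    exact ⟨π₁ :: l', by simp [hlen], by simp [hprod, hsplit], List.Forall₂.cons h1 hfa⟩

def SumDec {n : ℕ} (σ : Perm (Fin n)) (t : ℕ) : Prop :=
  ∀ i : Fin n, (i : ℕ) < t ↔ (σ i : ℕ) < t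

def SkewDec {n : ℕ} (σ : Perm (Fin n)) (t : ℕ) : Prop :=
  ∀ i : Fin n, (i : ℕ) < t ↔ n - t ≤ (σ i : ℕ)

section Del
variable {n : ℕ}

lemma sigma_castSucc_ne (σ : Perm (Fin (n+1))) (i : Fin n) :
    (σ i.castSucc : ℕ) ≠ (σ (Fin.last n) : ℕ) := by
  intro h
  exact absurd (σ.injective (Fin.val_injective h)) (Fin.castSucc_lt_last i).ne

def dval (σ : Perm (Fin (n+1))) (i : Fin n) : ℕ :=
  if (σ (Fin.last n) : ℕ) < (σ i.castSucc : ℕ) then (σ i.castSucc : ℕ) - 1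
  else (σ i.castSucc : ℕ)

lemma dval_lt (σ : Perm (Fin (n+1))) (i : Fin n) : dval σ i < n := by
  have h1 := sigma_castSucc_ne σ i
  have h2 : (σ i.castSucc : ℕ) ≤ n := Fin.is_le _
  have h3 : (σ (Fin.last n) : ℕ) ≤ n := Fin.is_le _
  unfold dval; split_ifs <;> omega

lemma dval_lt_iff (σ : Perm (Fin (n+1))) (i j : Fin n) :
    dval σ i < dval σ j ↔ (σ i.castSucc : ℕ) < (σ j.castSucc : ℕ) := by
  have h1 := sigma_castSucc_ne σ i
  have h2 := sigma_castSucc_ne σ j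
  unfold dval; split_ifs <;> omega

noncomputable def delLast (σ : Perm (Fin (n+1))) : Perm (Fin n) :=
  Equiv.ofBijective (fun i => (⟨dval σ i, dval_lt σ i⟩ : Fin n))
    (Finite.injective_iff_bijective.mp (by
      intro i j hij
      have hv : dval σ i = dval σ j := congrArg Fin.val hij
      have h1 : ¬ ((σ i.castSucc : ℕ) < (σ j.castSucc : ℕ)) := by
        rw [← dval_lt_iff]; omega
      have h2 : ¬ ((σ j.castSucc : ℕ) < (σ i.castSucc : ℕ)) := by
        rw [← dval_lt_iff]; omega
      have : σ i.castSucc = σ j.castSucc := Fin.val_injective (by omega)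
      exact Fin.castSucc_injective n (σ.injective this)))

lemma delLast_val (σ : Perm (Fin (n+1))) (i : Fin n) : (delLast σ i : ℕ) = dval σ i := rfl

lemma isPattern_delLast (σ : Perm (Fin (n+1))) : IsPattern (delLast σ) σ := by
  refine ⟨Fin.castSucc, Fin.strictMono_castSucc, fun i j => ?_⟩
  rw [Fin.lt_def, Fin.lt_def, delLast_val, delLast_val]
  exact dval_lt_iff σ i j

lemma separable_delLast {σ : Perm (Fin (n+1))} (h : Separable σ) : Separable (delLast σ) :=
  separable_of_isPattern h (isPattern_delLast σ)

lemma rev_mul_apply {m : ℕ} (σ : Perm (Fin m)) (x : Fin m) :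
    (Fin.revPerm * σ : Perm (Fin m)) x = (σ x).rev := rfl

lemma cmp3142_2413 : ∀ i j : Fin 4, perm3142 i < perm3142 j ↔ perm2413 j < perm2413 i := by
  decide

lemma cmp2413_3142 : ∀ i j : Fin 4, perm2413 i < perm2413 j ↔ perm3142 j < perm3142 i := by
  decide

lemma separable_rev {m : ℕ} {σ : Perm (Fin m)} (h : Separable σ) :
    Separable (Fin.revPerm * σ) := by
  constructor
  · rintro ⟨f, hf, ho⟩
    refine h.2 ⟨f, hf, fun i j => ?_⟩
    rw [cmp3142_2413 i j, ho j i, rev_mul_apply, rev_mul_apply, Fin.rev_lt_rev]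
  · rintro ⟨f, hf, ho⟩
    refine h.1 ⟨f, hf, fun i j => ?_⟩
    rw [cmp2413_3142 i j, ho j i, rev_mul_apply, rev_mul_apply, Fin.rev_lt_rev]

lemma delLast_rev (σ : Perm (Fin (n+1))) :
    delLast (Fin.revPerm * σ) = Fin.revPerm * delLast σ := by
  apply Equiv.ext
  intro i
  apply Fin.val_injective
  have h1 := sigma_castSucc_ne σ i
  have h2 : (σ i.castSucc : ℕ) ≤ n := Fin.is_le _
  have h3 : (σ (Fin.last n) : ℕ) ≤ n := Fin.is_le _
  have hd : dval σ i < n := dval_lt σ i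
  show dval (Fin.revPerm * σ) i = ((Fin.revPerm (delLast σ i)) : ℕ)
  rw [show Fin.revPerm (delLast σ i) = (delLast σ i).rev from rfl, Fin.val_rev, delLast_val]
  unfold dval
  rw [rev_mul_apply, rev_mul_apply, Fin.val_rev, Fin.val_rev]
  split_ifs <;> omega

lemma sumDec_rev_iff {m : ℕ} (σ : Perm (Fin m)) (t : ℕ) :
    SumDec (Fin.revPerm * σ) t ↔ SkewDec σ t := by
  unfold SumDec SkewDec
  apply forall_congr'
  intro i
  have h1 : (σ i : ℕ) < m := (σ i).is_lt
  rw [rev_mul_apply, Fin.val_rev]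
  constructor <;> intro h <;> omega

lemma skewDec_rev_iff {m : ℕ} (σ : Perm (Fin m)) (t : ℕ) :
    SkewDec (Fin.revPerm * σ) t ↔ SumDec σ t := by
  unfold SumDec SkewDec
  apply forall_congr'
  intro i
  have h1 : (σ i : ℕ) < m := (σ i).is_lt
  rw [rev_mul_apply, Fin.val_rev]
  constructor <;> intro h <;> omega

end Del

section Key
variable {n : ℕ}

lemma card_filter_val_lt (m v : ℕ) (h : v ≤ m) :
    ((univ : Finset (Fin m)).filter (fun y : Fin m => (y : ℕ) < v)).card = v := by
  rw [← Finset.card_range v]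
  apply Finset.card_bij' (fun (a : Fin m) _ => (a : ℕ))
    (fun b hb => (⟨b, lt_of_lt_of_le (Finset.mem_range.mp hb) h⟩ : Fin m)) <;>
    simp +contextual [Finset.mem_range]

lemma strictMono_fin4 {α : Type*} [Preorder α] {f : Fin 4 → α}
    (h0 : f 0 < f 1) (h1 : f 1 < f 2) (h2 : f 2 < f 3) : StrictMono f := by
  intro a b hab
  fin_cases a <;> fin_cases b <;>
    first
      | exact absurd hab (by decide)
      | exact h0
      | exact h1
      | exact h2
      | exact h0.trans h1
      | exact h1.trans h2
      | exact (h0.trans h1).trans h2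

lemma isPattern_of_strictMono {m : ℕ} (π : Perm (Fin 4)) (σ : Perm (Fin m)) (g : Fin 4 → Fin m)
    (hg : StrictMono g) (hs : StrictMono (fun x : Fin 4 => σ (g (π.symm x)))) :
    IsPattern π σ := by
  refine ⟨g, hg, fun a b => ?_⟩
  have h1 : σ (g a) = σ (g (π.symm (π a))) := by rw [Equiv.symm_apply_apply]
  have h2 : σ (g b) = σ (g (π.symm (π b))) := by rw [Equiv.symm_apply_apply]
  rw [h1, h2]
  exact (hs.lt_iff_lt).symm

lemma key_step (σ : Perm (Fin (n+1))) (hsep : Separable σ) (t : ℕ)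
    (ht1 : 1 ≤ t) (ht2 : t < n) (hd : SumDec (delLast σ) t) :
    ∃ t', 1 ≤ t' ∧ t' < n + 1 ∧ (SumDec σ t' ∨ SkewDec σ t') := by
  set v := (σ (Fin.last n) : ℕ) with hvdef
  have hvle : v ≤ n := Fin.is_le _
  by_cases hv : t ≤ v
  · refine ⟨t, ht1, by omega, Or.inl ?_⟩
    intro i
    by_cases hi : i = Fin.last n
    · subst hi
      simp only [Fin.val_last, ← hvdef]
      omega
    · have hlt : (i : ℕ) < n := by
        rcases lt_or_eq_of_le (Fin.is_le i) with h | h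
        · exact h
        · exact absurd (Fin.val_injective (h.trans rfl) : i = Fin.last n) hi
      have hci : (⟨(i : ℕ), hlt⟩ : Fin n).castSucc = i := rfl
      have hdi := hd ⟨(i : ℕ), hlt⟩
      rw [delLast_val] at hdi
      have hne := sigma_castSucc_ne σ ⟨(i : ℕ), hlt⟩
      rw [hci] at hne
      unfold dval at hdi
      rw [hci] at hdi
      simp only at hdi
      rw [← hvdef] at hdi hne
      have hival : ((⟨(i : ℕ), hlt⟩ : Fin n) : ℕ) = (i : ℕ) := rfl
      rw [hival] at hdi
      split_ifs at hdi <;> omega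
  · push_neg at hv
    have hA : ∀ k : Fin (n+1), (k : ℕ) < t → (σ k : ℕ) ≤ t ∧ (σ k : ℕ) ≠ v := by
      intro k hk
      have hkn : (k : ℕ) < n := by omega
      have hdi := (hd ⟨(k : ℕ), hkn⟩).mp hk
      rw [delLast_val] at hdi
      have hne := sigma_castSucc_ne σ ⟨(k : ℕ), hkn⟩
      unfold dval at hdi
      rw [show (⟨(k : ℕ), hkn⟩ : Fin n).castSucc = k from rfl] at hdi hne
      rw [← hvdef] at hdi hne
      split_ifs at hdi <;> omega
    have hB : ∀ k : Fin (n+1), t ≤ (k : ℕ) → (k : ℕ) < n → t + 1 ≤ (σ k : ℕ) := by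
      intro k hk hkn
      have hdi := hd ⟨(k : ℕ), hkn⟩
      rw [delLast_val] at hdi
      have hne := sigma_castSucc_ne σ ⟨(k : ℕ), hkn⟩
      unfold dval at hdi
      rw [show (⟨(k : ℕ), hkn⟩ : Fin n).castSucc = k from rfl] at hdi hne
      rw [← hvdef] at hdi hne
      rw [show ((⟨(k : ℕ), hkn⟩ : Fin n) : ℕ) = (k : ℕ) from rfl] at hdi
      split_ifs at hdi <;> omega
    by_cases hP : ∃ i j : Fin (n+1), (i : ℕ) < (j : ℕ) ∧ (j : ℕ) < t ∧ (σ j : ℕ) < v ∧ v < (σ i : ℕ)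
    · exfalso
      apply hsep.2
      obtain ⟨i, j, hij, hjt, hsj, hsi⟩ := hP
      have hsile : (σ i : ℕ) ≤ t := (hA i (by omega)).1
      set posT : Fin (n+1) := ⟨t, by omega⟩ with hposT
      have hposTval : (posT : ℕ) = t := rfl
      have hlastval : ((Fin.last n : Fin (n+1)) : ℕ) = n := rfl
      have hpT : t + 1 ≤ (σ posT : ℕ) := hB posT (le_of_eq hposTval.symm) (by omega)
      apply isPattern_of_strictMono perm3142 σ ![i, j, posT, Fin.last n]
      · apply strictMono_fin4
        · show i < j
          rw [Fin.lt_def]; omega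
        · show j < posT
          rw [Fin.lt_def]; omega
        · show posT < Fin.last n
          rw [Fin.lt_def]; omega
      · apply strictMono_fin4
        · show σ j < σ (Fin.last n)
          rw [Fin.lt_def]; omega
        · show σ (Fin.last n) < σ i
          rw [Fin.lt_def]; omega
        · show σ i < σ posT
          rw [Fin.lt_def]; omega
    · push_neg at hP
      by_cases hv1 : 1 ≤ v
      · refine ⟨v, hv1, by omega, Or.inl ?_⟩
        have step1 : ∀ k : Fin (n+1), (σ k : ℕ) < v → (k : ℕ) < v := by
          intro k hk
          by_contra hky
          push_neg at hky
          have hklast : k ≠ Fin.last n := by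
            intro h; rw [h, ← hvdef] at hk; omega
          have hkn : (k : ℕ) < n := by
            rcases lt_or_eq_of_le (Fin.is_le k) with h | h
            · exact h
            · exact absurd (Fin.val_injective (h.trans rfl) : k = Fin.last n) hklast
          have hkt : (k : ℕ) < t := by
            by_contra hc
            push_neg at hc
            have := hB k hc hkn
            omega
          have hall : ∀ x : Fin (n+1), (x : ℕ) ≤ (k : ℕ) → (σ x : ℕ) < v := by
            intro x hx
            rcases lt_or_eq_of_le hx with h | h
            · have h1 := hP x k h (by omega) hk
              have h2 := (hA x (by omega)).2
              omega
            · rw [show x = k from Fin.val_injective h]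
              exact hk
          have hsub : (univ.filter (fun x : Fin (n+1) => (x : ℕ) < (k : ℕ) + 1)).image σ ⊆
              univ.filter (fun y : Fin (n+1) => (y : ℕ) < v) := by
            intro y hy
            simp only [Finset.mem_image, Finset.mem_filter, Finset.mem_univ, true_and] at hy ⊢
            obtain ⟨x, hx, rfl⟩ := hy
            exact hall x (by omega)
          have hc1 := Finset.card_le_card hsub
          rw [Finset.card_image_of_injective _ σ.injective,
            card_filter_val_lt _ _ (by omega), card_filter_val_lt _ _ (by omega)] at hc1
          omega
        have step2 : ∀ k : Fin (n+1), (k : ℕ) < v → (σ k : ℕ) < v := by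
          intro k hk
          have hsub : (univ.filter (fun y : Fin (n+1) => (y : ℕ) < v)).image σ.symm ⊆
              univ.filter (fun x : Fin (n+1) => (x : ℕ) < v) := by
            intro x hx
            simp only [Finset.mem_image, Finset.mem_filter, Finset.mem_univ, true_and] at hx ⊢
            obtain ⟨y, hy, rfl⟩ := hx
            have : (σ (σ.symm y) : ℕ) < v := by rw [Equiv.apply_symm_apply]; exact hy
            exact step1 _ this
          have heq : (univ.filter (fun y : Fin (n+1) => (y : ℕ) < v)).image σ.symm =
              univ.filter (fun x : Fin (n+1) => (x : ℕ) < v) := by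
            apply Finset.eq_of_subset_of_card_le hsub
            rw [Finset.card_image_of_injective _ σ.symm.injective]
          have hk' : k ∈ (univ.filter (fun y : Fin (n+1) => (y : ℕ) < v)).image σ.symm := by
            rw [heq]; simp [hk]
          simp only [Finset.mem_image, Finset.mem_filter, Finset.mem_univ, true_and] at hk'
          obtain ⟨y, hy, hyk⟩ := hk'
          have : σ k = y := by rw [← hyk, Equiv.apply_symm_apply]
          rw [this]; exact hy
        intro i
        exact ⟨fun h => step2 i h, fun h => step1 i h⟩
      · push_neg at hv1
        have hv0 : v = 0 := by omega
        refine ⟨n, by omega, by omega, Or.inr ?_⟩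
        intro i
        have hsig : (σ i : ℕ) = 0 ↔ i = Fin.last n := by
          constructor
          · intro h
            have : σ i = σ (Fin.last n) := by
              apply Fin.val_injective; rw [h, ← hvdef, hv0]
            exact σ.injective this
          · intro h; rw [h, ← hvdef]; exact hv0
        have hlast : (i : ℕ) < n ↔ i ≠ Fin.last n := by
          constructor
          · intro h hl; rw [hl] at h; simp at h
          · intro h
            rcases lt_or_eq_of_le (Fin.is_le i) with h' | h'
            · exact h'
            · exact absurd (Fin.val_injective (h'.trans rfl) : i = Fin.last n) h
        rw [hlast]
        have : n + 1 - n = 1 := by omega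
        rw [this]
        constructor
        · intro h
          rcases Nat.eq_zero_or_pos (σ i : ℕ) with h0 | h0
          · exact absurd (hsig.mp h0) h
          · omega
        · intro h hl
          have := hsig.mpr hl
          omega

end Key

theorem exists_dec : ∀ n : ℕ, ∀ σ : Perm (Fin n), 2 ≤ n → Separable σ →
    ∃ t, 1 ≤ t ∧ t < n ∧ (SumDec σ t ∨ SkewDec σ t) := by
  intro n
  induction n using Nat.strong_induction_on with
  | _ n ih =>
    intro σ h2 hsep
    match n, σ, h2, ih with
    | (k+1), σ, h2, ih =>
      by_cases hk2 : k < 2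
      · have hk : k = 1 := by omega
        subst hk
        have hne : σ 0 ≠ σ 1 := fun h => absurd (σ.injective h) (by decide)
        have h0 : (σ 0 : ℕ) < 2 := (σ 0).is_lt
        have h1 : (σ 1 : ℕ) < 2 := (σ 1).is_lt
        have hne' : (σ 0 : ℕ) ≠ (σ 1 : ℕ) := fun h => hne (Fin.val_injective h)
        rcases Nat.eq_zero_or_pos (σ 0 : ℕ) with hz | hp
        · refine ⟨1, le_refl 1, by omega, Or.inl ?_⟩
          intro i
          fin_cases i
          · show (0 : ℕ) < 1 ↔ (σ 0 : ℕ) < 1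
            omega
          · show (1 : ℕ) < 1 ↔ (σ 1 : ℕ) < 1
            omega
        · refine ⟨1, le_refl 1, by omega, Or.inr ?_⟩
          intro i
          fin_cases i
          · show (0 : ℕ) < 1 ↔ 2 - 1 ≤ (σ 0 : ℕ)
            omega
          · show (1 : ℕ) < 1 ↔ 2 - 1 ≤ (σ 1 : ℕ)
            omega
      · push_neg at hk2
        obtain ⟨t, ht1, htk, hdec⟩ :=
          ih k (by omega) (delLast σ) hk2 (separable_delLast hsep)
        rcases hdec with hsum | hskew
        · exact key_step σ hsep t ht1 htk hsum
        · have hd' : SumDec (delLast (Fin.revPerm * σ)) t := by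
            rw [delLast_rev]
            exact (sumDec_rev_iff (delLast σ) t).mpr hskew
          obtain ⟨t', ht'1, ht'n, hdec'⟩ :=
            key_step (Fin.revPerm * σ) (separable_rev hsep) t ht1 htk hd'
          refine ⟨t', ht'1, ht'n, ?_⟩
          rcases hdec' with h | h
          · exact Or.inr ((sumDec_rev_iff σ t').mp h)
          · exact Or.inl ((skewDec_rev_iff σ t').mp h)

section Window
variable {n : ℕ}

noncomputable def windowPerm (σ : Perm (Fin n)) (m' b : ℕ) (pos : Fin m' → Fin n)
    (hpos : StrictMono pos)
    (hval : ∀ j, b ≤ (σ (pos j) : ℕ) ∧ (σ (pos j) : ℕ) < b + m') : Perm (Fin m') :=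
  Equiv.ofBijective (fun j => (⟨(σ (pos j) : ℕ) - b, by have := hval j; omega⟩ : Fin m'))
    (Finite.injective_iff_bijective.mp (by
      intro j1 j2 hj
      have h1 := hval j1
      have h2 := hval j2
      have hv : (σ (pos j1) : ℕ) = (σ (pos j2) : ℕ) := by
        have := congrArg Fin.val hj
        simp only at this
        omega
      exact hpos.injective (σ.injective (Fin.val_injective hv))))

lemma windowPerm_val (σ : Perm (Fin n)) (m' b : ℕ) (pos : Fin m' → Fin n)
    (hpos : StrictMono pos) (hval) (j : Fin m') :
    (windowPerm σ m' b pos hpos hval j : ℕ) = (σ (pos j) : ℕ) - b := rfl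

lemma windowPerm_isPattern (σ : Perm (Fin n)) (m' b : ℕ) (pos : Fin m' → Fin n)
    (hpos : StrictMono pos) (hval) :
    IsPattern (windowPerm σ m' b pos hpos hval) σ := by
  refine ⟨pos, hpos, fun i j => ?_⟩
  rw [Fin.lt_def, Fin.lt_def, windowPerm_val, windowPerm_val]
  have h1 := hval i
  have h2 := hval j
  omega

lemma windowPerm_separable {σ : Perm (Fin n)} (hσ : Separable σ) (m' b : ℕ)
    (pos : Fin m' → Fin n) (hpos : StrictMono pos) (hval) :
    Separable (windowPerm σ m' b pos hpos hval) :=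
  separable_of_isPattern hσ (windowPerm_isPattern σ m' b pos hpos hval)

-- position maps
def posL (t : ℕ) (ht : t ≤ n) : Fin t → Fin n := fun j => ⟨(j : ℕ), by omega⟩

def posR (t : ℕ) : Fin (n - t) → Fin n := fun j => ⟨t + (j : ℕ), by omega⟩

lemma posL_mono (t : ℕ) (ht : t ≤ n) : StrictMono (posL (n := n) t ht) := by
  intro a b hab; rw [Fin.lt_def] at hab ⊢; exact hab

lemma posR_mono (t : ℕ) : StrictMono (posR (n := n) t) := by
  intro a b hab; rw [Fin.lt_def] at hab ⊢; simp only [posR]; omega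

noncomputable def wSumL (σ : Perm (Fin n)) (t : ℕ) (ht : t ≤ n) (h : SumDec σ t) :
    Perm (Fin t) :=
  windowPerm σ t 0 (posL t ht) (posL_mono t ht) (by
    intro j
    refine ⟨Nat.zero_le _, ?_⟩
    have := (h (posL t ht j)).mp (by show (j : ℕ) < t; omega)
    omega)

noncomputable def wSumR (σ : Perm (Fin n)) (t : ℕ) (ht : t ≤ n) (h : SumDec σ t) :
    Perm (Fin (n - t)) :=
  windowPerm σ (n - t) t (posR t) (posR_mono t) (by
    intro j
    have hj : ¬ ((posR (n := n) t j : ℕ) < t) := by show ¬ (t + (j : ℕ) < t); omega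
    have h2 : ¬ ((σ (posR t j) : ℕ) < t) := fun hc => hj ((h _).mpr hc)
    have h3 : (σ (posR t j) : ℕ) < n := (σ _).is_lt
    omega)

noncomputable def wSkewL (σ : Perm (Fin n)) (t : ℕ) (ht : t ≤ n) (h : SkewDec σ t) :
    Perm (Fin t) :=
  windowPerm σ t (n - t) (posL t ht) (posL_mono t ht) (by
    intro j
    have h1 := (h (posL t ht j)).mp (by show (j : ℕ) < t; omega)
    have h3 : (σ (posL t ht j) : ℕ) < n := (σ _).is_lt
    constructor <;> omega)

noncomputable def wSkewR (σ : Perm (Fin n)) (t : ℕ) (ht : t ≤ n) (h : SkewDec σ t) :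
    Perm (Fin (n - t)) :=
  windowPerm σ (n - t) 0 (posR t) (posR_mono t) (by
    intro j
    have hj : ¬ ((posR (n := n) t j : ℕ) < t) := by show ¬ (t + (j : ℕ) < t); omega
    have h2 : ¬ (n - t ≤ (σ (posR t j) : ℕ)) := fun hc => hj ((h _).mpr hc)
    omega)

lemma sum_eq_of_parts (σ₁ σ₂ : Perm (Fin n)) {t₁ t₂ : ℕ} (hteq : t₁ = t₂)
    (ht₁ : t₁ ≤ n) (ht₂ : t₂ ≤ n) (h₁ : SumDec σ₁ t₁) (h₂ : SumDec σ₂ t₂)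
    (hL : HEq (wSumL σ₁ t₁ ht₁ h₁) (wSumL σ₂ t₂ ht₂ h₂))
    (hR : HEq (wSumR σ₁ t₁ ht₁ h₁) (wSumR σ₂ t₂ ht₂ h₂)) : σ₁ = σ₂ := by
  subst hteq
  have hL' := eq_of_heq hL
  have hR' := eq_of_heq hR
  apply Equiv.ext
  intro x
  by_cases hx : (x : ℕ) < t₁
  · have := congrArg (fun (e : Perm (Fin t₁)) => (e ⟨(x : ℕ), hx⟩ : ℕ)) hL'
    simp only [wSumL, windowPerm_val] at this
    have hp : posL (n := n) t₁ ht₁ ⟨(x : ℕ), hx⟩ = x := Fin.val_injective rfl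
    rw [hp] at this
    have hb1 : (σ₁ x : ℕ) < t₁ := (h₁ x).mp hx
    have hb2 : (σ₂ x : ℕ) < t₁ := (h₂ x).mp hx
    exact Fin.val_injective (by omega)
  · have hxn : (x : ℕ) < n := x.is_lt
    have hjlt : (x : ℕ) - t₁ < n - t₁ := by omega
    have := congrArg (fun (e : Perm (Fin (n - t₁))) => (e ⟨(x : ℕ) - t₁, hjlt⟩ : ℕ)) hR'
    simp only [wSumR, windowPerm_val] at this
    have hp : posR (n := n) t₁ ⟨(x : ℕ) - t₁, hjlt⟩ = x := Fin.val_injective (by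
      show t₁ + ((x : ℕ) - t₁) = (x : ℕ); omega)
    rw [hp] at this
    have hb1 : ¬ ((σ₁ x : ℕ) < t₁) := fun hc => hx ((h₁ x).mpr hc)
    have hb2 : ¬ ((σ₂ x : ℕ) < t₁) := fun hc => hx ((h₂ x).mpr hc)
    exact Fin.val_injective (by omega)

lemma skew_eq_of_parts (σ₁ σ₂ : Perm (Fin n)) {t₁ t₂ : ℕ} (hteq : t₁ = t₂)
    (ht₁ : t₁ ≤ n) (ht₂ : t₂ ≤ n) (h₁ : SkewDec σ₁ t₁) (h₂ : SkewDec σ₂ t₂)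
    (hL : HEq (wSkewL σ₁ t₁ ht₁ h₁) (wSkewL σ₂ t₂ ht₂ h₂))
    (hR : HEq (wSkewR σ₁ t₁ ht₁ h₁) (wSkewR σ₂ t₂ ht₂ h₂)) : σ₁ = σ₂ := by
  subst hteq
  have hL' := eq_of_heq hL
  have hR' := eq_of_heq hR
  apply Equiv.ext
  intro x
  by_cases hx : (x : ℕ) < t₁
  · have := congrArg (fun (e : Perm (Fin t₁)) => (e ⟨(x : ℕ), hx⟩ : ℕ)) hL'
    simp only [wSkewL, windowPerm_val] at this
    have hp : posL (n := n) t₁ ht₁ ⟨(x : ℕ), hx⟩ = x := Fin.val_injective rfl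
    rw [hp] at this
    have hb1 : n - t₁ ≤ (σ₁ x : ℕ) := (h₁ x).mp hx
    have hb2 : n - t₁ ≤ (σ₂ x : ℕ) := (h₂ x).mp hx
    exact Fin.val_injective (by omega)
  · have hxn : (x : ℕ) < n := x.is_lt
    have hjlt : (x : ℕ) - t₁ < n - t₁ := by omega
    have := congrArg (fun (e : Perm (Fin (n - t₁))) => (e ⟨(x : ℕ) - t₁, hjlt⟩ : ℕ)) hR'
    simp only [wSkewR, windowPerm_val] at this
    have hp : posR (n := n) t₁ ⟨(x : ℕ) - t₁, hjlt⟩ = x := Fin.val_injective (by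
      show t₁ + ((x : ℕ) - t₁) = (x : ℕ); omega)
    rw [hp] at this
    have hb1 : ¬ (n - t₁ ≤ (σ₁ x : ℕ)) := fun hc => hx ((h₁ x).mpr hc)
    have hb2 : ¬ (n - t₁ ≤ (σ₂ x : ℕ)) := fun hc => hx ((h₂ x).mpr hc)
    exact Fin.val_injective (by omega)

end Window

noncomputable def Sfin (n : ℕ) : Finset (Perm (Fin n)) :=
  @Finset.filter _ (fun σ => Separable σ) (Classical.decPred _) Finset.univ

lemma mem_Sfin {n : ℕ} {σ : Perm (Fin n)} : σ ∈ Sfin n ↔ Separable σ := by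
  unfold Sfin
  simp [Finset.mem_filter]

section Encode
variable {n : ℕ}

open Classical in
noncomputable def encode (n : ℕ) (hn : 2 ≤ n) (σ : Perm (Fin n)) (hσ : Separable σ) :
    (t : ℕ) × (Bool × Perm (Fin t) × Perm (Fin (n - t))) :=
  if hs : SumDec σ (Nat.find (exists_dec n σ hn hσ)) then
    ⟨Nat.find (exists_dec n σ hn hσ),
      (true, wSumL σ _ (le_of_lt (Nat.find_spec (exists_dec n σ hn hσ)).2.1) hs,
        wSumR σ _ (le_of_lt (Nat.find_spec (exists_dec n σ hn hσ)).2.1) hs)⟩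
  else
    ⟨Nat.find (exists_dec n σ hn hσ),
      (false, wSkewL σ _ (le_of_lt (Nat.find_spec (exists_dec n σ hn hσ)).2.1)
          (((Nat.find_spec (exists_dec n σ hn hσ)).2.2).resolve_left hs),
        wSkewR σ _ (le_of_lt (Nat.find_spec (exists_dec n σ hn hσ)).2.1)
          (((Nat.find_spec (exists_dec n σ hn hσ)).2.2).resolve_left hs))⟩

lemma pair_heq {t₁ t₂ n : ℕ} (h : t₁ = t₂)
    (x₁ : Bool × Perm (Fin t₁) × Perm (Fin (n - t₁)))
    (x₂ : Bool × Perm (Fin t₂) × Perm (Fin (n - t₂))) (hx : HEq x₁ x₂) :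
    x₁.1 = x₂.1 ∧ HEq x₁.2.1 x₂.2.1 ∧ HEq x₁.2.2 x₂.2.2 := by
  subst h
  rw [eq_of_heq hx]
  exact ⟨rfl, HEq.rfl, HEq.rfl⟩

open Classical in
lemma encode_inj (n : ℕ) (hn : 2 ≤ n) (σ₁ σ₂ : Perm (Fin n)) (h₁ : Separable σ₁)
    (h₂ : Separable σ₂) (hEq : encode n hn σ₁ h₁ = encode n hn σ₂ h₂) : σ₁ = σ₂ := by
  unfold encode at hEq
  by_cases hs₁ : SumDec σ₁ (Nat.find (exists_dec n σ₁ hn h₁)) <;>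
    by_cases hs₂ : SumDec σ₂ (Nat.find (exists_dec n σ₂ hn h₂))
  · rw [dif_pos hs₁, dif_pos hs₂] at hEq
    have hts := congrArg Sigma.fst hEq
    simp only at hts
    obtain ⟨hb, hL, hR⟩ := pair_heq hts _ _ (Sigma.ext_iff.mp hEq).2
    exact sum_eq_of_parts σ₁ σ₂ hts _ _ hs₁ hs₂ hL hR
  · rw [dif_pos hs₁, dif_neg hs₂] at hEq
    have hts := congrArg Sigma.fst hEq
    simp only at hts
    obtain ⟨hb, hL, hR⟩ := pair_heq hts _ _ (Sigma.ext_iff.mp hEq).2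
    exact absurd hb (by simp)
  · rw [dif_neg hs₁, dif_pos hs₂] at hEq
    have hts := congrArg Sigma.fst hEq
    simp only at hts
    obtain ⟨hb, hL, hR⟩ := pair_heq hts _ _ (Sigma.ext_iff.mp hEq).2
    exact absurd hb (by simp)
  · rw [dif_neg hs₁, dif_neg hs₂] at hEq
    have hts := congrArg Sigma.fst hEq
    simp only at hts
    obtain ⟨hb, hL, hR⟩ := pair_heq hts _ _ (Sigma.ext_iff.mp hEq).2
    exact skew_eq_of_parts σ₁ σ₂ hts _ _
      (((Nat.find_spec (exists_dec n σ₁ hn h₁)).2.2).resolve_left hs₁)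
      (((Nat.find_spec (exists_dec n σ₂ hn h₂)).2.2).resolve_left hs₂) hL hR

open Classical in
lemma card_rec (n : ℕ) (hn : 2 ≤ n) :
    (Sfin n).card ≤ ∑ t ∈ Finset.Ico 1 n, 2 * (Sfin t).card * (Sfin (n - t)).card := by
  have hcard : ((Finset.Ico 1 n).sigma
      (fun t => (Finset.univ : Finset Bool) ×ˢ (Sfin t) ×ˢ (Sfin (n - t)))).card =
      ∑ t ∈ Finset.Ico 1 n, 2 * (Sfin t).card * (Sfin (n - t)).card := by
    rw [Finset.card_sigma]
    apply Finset.sum_congr rfl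
    intro t _
    rw [Finset.card_product, Finset.card_product]
    simp [mul_assoc]
  rw [← hcard]
  apply Finset.card_le_card_of_injOn
    (fun σ => if hσ : Separable σ then encode n hn σ hσ else ⟨1, (true, 1, 1)⟩)
  · intro σ hσmem
    have hσ : Separable σ := mem_Sfin.mp hσmem
    simp only [dif_pos hσ]
    have hspec := Nat.find_spec (exists_dec n σ hn hσ)
    by_cases hs : SumDec σ (Nat.find (exists_dec n σ hn hσ))
    · unfold encode
      rw [dif_pos hs]
      rw [Finset.mem_coe, Finset.mem_sigma]
      refine ⟨Finset.mem_Ico.mpr ⟨hspec.1, hspec.2.1⟩, ?_⟩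
      simp only [Finset.mem_product]
      refine ⟨Finset.mem_univ _, ?_, ?_⟩ <;> rw [mem_Sfin]
      · exact windowPerm_separable hσ _ _ _ _ _
      · exact windowPerm_separable hσ _ _ _ _ _
    · unfold encode
      rw [dif_neg hs]
      rw [Finset.mem_coe, Finset.mem_sigma]
      refine ⟨Finset.mem_Ico.mpr ⟨hspec.1, hspec.2.1⟩, ?_⟩
      simp only [Finset.mem_product]
      refine ⟨Finset.mem_univ _, ?_, ?_⟩ <;> rw [mem_Sfin]
      · exact windowPerm_separable hσ _ _ _ _ _
      · exact windowPerm_separable hσ _ _ _ _ _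
  · intro σ₁ h₁m σ₂ h₂m hEq
    have hσ₁ : Separable σ₁ := mem_Sfin.mp (by simpa using h₁m)
    have hσ₂ : Separable σ₂ := mem_Sfin.mp (by simpa using h₂m)
    simp only [dif_pos hσ₁, dif_pos hσ₂] at hEq
    exact encode_inj n hn σ₁ σ₂ hσ₁ hσ₂ hEq

end Encode

section Analysis

lemma sum_inv_sq : ∀ n : ℕ, 1 ≤ n → (∑ t ∈ Finset.Ico 1 n, (1:ℝ)/(t:ℝ)^2) ≤ 2 - 2/(n:ℝ) := by
  intro n
  induction n with
  | zero => intro h; omega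
  | succ m ih =>
    intro _
    by_cases hm : 1 ≤ m
    · rw [Finset.sum_Ico_succ_top hm]
      have h1 := ih hm
      have hm1 : (1:ℝ) ≤ (m:ℝ) := by exact_mod_cast hm
      have hmpos : (0:ℝ) < (m:ℝ) := by linarith
      have hm1pos : (0:ℝ) < (m:ℝ) + 1 := by linarith
      have key : (1:ℝ)/(m:ℝ)^2 ≤ 2/(m:ℝ) - 2/((m:ℝ)+1) := by
        rw [div_sub_div _ _ (ne_of_gt hmpos) (ne_of_gt hm1pos),
          div_le_div_iff₀ (by positivity) (by positivity)]
        nlinarith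
      have hcast : ((m:ℝ) + 1) = ((m+1 : ℕ) : ℝ) := by push_cast; ring
      calc (∑ t ∈ Finset.Ico 1 m, (1:ℝ)/(t:ℝ)^2) + 1/(m:ℝ)^2
          ≤ (2 - 2/(m:ℝ)) + (2/(m:ℝ) - 2/((m:ℝ)+1)) := by linarith
        _ = 2 - 2/((m:ℝ)+1) := by ring
        _ = 2 - 2/((m+1:ℕ):ℝ) := by rw [hcast]
    · have hm0 : m = 0 := by omega
      subst hm0
      norm_num

lemma sum_inv_sq' (n : ℕ) (hn : 1 ≤ n) : (∑ t ∈ Finset.Ico 1 n, (1:ℝ)/(t:ℝ)^2) ≤ 2 := by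
  have h := sum_inv_sq n hn
  have : (0:ℝ) ≤ 2/(n:ℝ) := by positivity
  linarith

lemma sum_reflect (n : ℕ) :
    (∑ t ∈ Finset.Ico 1 n, (1:ℝ)/(((n - t : ℕ)):ℝ)^2) = ∑ t ∈ Finset.Ico 1 n, (1:ℝ)/(t:ℝ)^2 := by
  apply Finset.sum_nbij' (i := fun t => n - t) (j := fun t => n - t)
  · intro a ha; simp only [Finset.mem_Ico] at *; omega
  · intro a ha; simp only [Finset.mem_Ico] at *; omega
  · intro a ha; simp only [Finset.mem_Ico] at ha; omega
  · intro a ha; simp only [Finset.mem_Ico] at ha; omega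
  · intro a _; rfl

lemma sep_bound : ∀ n : ℕ, 1 ≤ n → ((Sfin n).card : ℝ) ≤ 32^n / (32 * (n:ℝ)^2) := by
  intro n
  induction n using Nat.strong_induction_on with
  | _ n ih =>
    intro hn
    by_cases hn2 : 2 ≤ n
    · have h0 := card_rec n hn2
      have hcast : ((Sfin n).card : ℝ) ≤
          ∑ t ∈ Finset.Ico 1 n, 2 * ((Sfin t).card : ℝ) * ((Sfin (n - t)).card : ℝ) := by
        calc ((Sfin n).card : ℝ)
            ≤ ((∑ t ∈ Finset.Ico 1 n, 2 * (Sfin t).card * (Sfin (n-t)).card : ℕ) : ℝ) := by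
              exact_mod_cast h0
          _ = ∑ t ∈ Finset.Ico 1 n, 2 * ((Sfin t).card : ℝ) * ((Sfin (n - t)).card : ℝ) := by
              push_cast
              exact Finset.sum_congr rfl (fun x _ => by ring)
      have hterm : ∀ t ∈ Finset.Ico 1 n,
          2 * ((Sfin t).card : ℝ) * ((Sfin (n - t)).card : ℝ) ≤
            32^n / (128 * (n:ℝ)^2) * (1/(t:ℝ)^2 + 1/(((n - t : ℕ)):ℝ)^2) := by
        intro t ht
        rw [Finset.mem_Ico] at ht
        obtain ⟨ht1, htn⟩ := ht
        have hnt1 : 1 ≤ n - t := by omega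
        have hbt := ih t htn ht1
        have hbnt := ih (n - t) (by omega) hnt1
        have hx1 : (1:ℝ) ≤ (t:ℝ) := by exact_mod_cast ht1
        have hy1 : (1:ℝ) ≤ ((n - t : ℕ):ℝ) := by exact_mod_cast hnt1
        have hxpos : (0:ℝ) < (t:ℝ) := by linarith
        have hypos : (0:ℝ) < ((n - t : ℕ):ℝ) := by linarith
        have hsum : (t:ℝ) + ((n - t : ℕ):ℝ) = (n:ℝ) := by
          have : t + (n - t) = n := by omega
          exact_mod_cast congrArg (fun k : ℕ => (k : ℝ)) this
        have hpowsplit : (32:ℝ)^t * 32^(n-t) = 32^n := by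
          rw [← pow_add]
          congr 1
          omega
        have hnn : (0:ℝ) < (n:ℝ) := by
          have : (1:ℝ) ≤ (n:ℝ) := by exact_mod_cast hn
          linarith
        have step1 : 2 * ((Sfin t).card : ℝ) * ((Sfin (n - t)).card : ℝ) ≤
            2 * (32^t / (32 * (t:ℝ)^2)) * (32^(n-t) / (32 * ((n - t:ℕ):ℝ)^2)) := by
          have hnn1 : (0:ℝ) ≤ ((Sfin (n - t)).card : ℝ) := by positivity
          have hb1 : (0:ℝ) ≤ 2 * (32^t / (32 * (t:ℝ)^2)) := by positivity
          have h2 : 2 * ((Sfin t).card : ℝ) ≤ 2 * (32^t / (32 * (t:ℝ)^2)) := by linarith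
          calc 2 * ((Sfin t).card : ℝ) * ((Sfin (n - t)).card : ℝ)
              ≤ 2 * (32^t / (32 * (t:ℝ)^2)) * ((Sfin (n - t)).card : ℝ) := by
                apply mul_le_mul_of_nonneg_right h2 hnn1
            _ ≤ 2 * (32^t / (32 * (t:ℝ)^2)) * (32^(n-t) / (32 * ((n - t:ℕ):ℝ)^2)) := by
                apply mul_le_mul_of_nonneg_left hbnt hb1
        refine le_trans step1 ?_
        set x := (t:ℝ)
        set y := ((n - t:ℕ):ℝ)
        have hxy : x^2 > 0 := by positivity
        have hyy : y^2 > 0 := by positivity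
        have lhs_eq : 2 * ((32:ℝ)^t / (32 * x^2)) * (32^(n-t) / (32 * y^2)) =
            32^n * (1/(512 * x^2 * y^2)) := by
          field_simp
          rw [← hpowsplit]
          ring
        have rhs_eq : (32:ℝ)^n / (128 * (n:ℝ)^2) * (1/x^2 + 1/y^2) =
            32^n * ((x^2 + y^2) / (128 * (n:ℝ)^2 * x^2 * y^2)) := by
          field_simp
          ring
        rw [lhs_eq, rhs_eq]
        apply mul_le_mul_of_nonneg_left _ (by positivity)
        rw [div_le_div_iff₀ (by positivity) (by positivity)]
        have hn4 : (n:ℝ)^2 ≤ 4 * (x^2 + y^2) := by nlinarith [sq_nonneg (x - y)]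
        nlinarith [mul_le_mul_of_nonneg_right hn4 (le_of_lt (mul_pos hxy hyy)),
          mul_pos hxy hyy]
      have hsumle := Finset.sum_le_sum hterm
      have hfinal : ∑ t ∈ Finset.Ico 1 n,
          32^n / (128 * (n:ℝ)^2) * (1/(t:ℝ)^2 + 1/(((n - t : ℕ)):ℝ)^2) ≤ 32^n / (32 * (n:ℝ)^2) := by
        rw [← Finset.mul_sum]
        rw [Finset.sum_add_distrib, sum_reflect]
        have hS := sum_inv_sq' n hn
        have hnn : (0:ℝ) < (n:ℝ) := by
          have : (1:ℝ) ≤ (n:ℝ) := by exact_mod_cast hn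
          linarith
        have hpos : (0:ℝ) ≤ 32^n / (128 * (n:ℝ)^2) := by positivity
        calc 32^n / (128 * (n:ℝ)^2) *
              ((∑ t ∈ Finset.Ico 1 n, (1:ℝ)/(t:ℝ)^2) + ∑ t ∈ Finset.Ico 1 n, (1:ℝ)/(t:ℝ)^2)
            ≤ 32^n / (128 * (n:ℝ)^2) * 4 := by
              apply mul_le_mul_of_nonneg_left _ hpos
              linarith
          _ = 32^n / (32 * (n:ℝ)^2) := by
              field_simp
              ring
      linarith
    · have hn1 : n = 1 := by omega
      subst hn1
      have hcard : (Sfin 1).card ≤ 1 := by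
        have := Finset.card_le_univ (Sfin 1)
        simpa [Finset.card_univ] using this
      have : ((Sfin 1).card : ℝ) ≤ 1 := by exact_mod_cast hcard
      norm_num
      linarith

lemma sep_card_le (n : ℕ) (hn : 1 ≤ n) : (Sfin n).card ≤ 32^n := by
  have h := sep_bound n hn
  have hnn : (1:ℝ) ≤ 32 * (n:ℝ)^2 := by
    have : (1:ℝ) ≤ (n:ℝ) := by exact_mod_cast hn
    nlinarith
  have h2 : (32:ℝ)^n / (32 * (n:ℝ)^2) ≤ 32^n := by
    apply div_le_self (by positivity) hnn
  have h3 : ((Sfin n).card : ℝ) ≤ ((32^n : ℕ) : ℝ) := by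
    push_cast
    linarith
  exact_mod_cast h3

end Analysis

section Final

lemma pow_mul_fact (a : ℕ) : ∀ k : ℕ, a^k * a.factorial ≤ (a + k).factorial := by
  intro k
  induction k with
  | zero => simp
  | succ k ih =>
    calc a^(k+1) * a.factorial = a * (a^k * a.factorial) := by ring
      _ ≤ a * (a + k).factorial := Nat.mul_le_mul_left _ ih
      _ ≤ (a + k + 1) * (a + k).factorial := Nat.mul_le_mul_right _ (by omega)
      _ = (a + (k+1)).factorial := by
          rw [show a + (k+1) = (a+k) + 1 from by omega, Nat.factorial_succ]

lemma pow_self_le_fact (a : ℕ) : a^a ≤ (2*a).factorial := by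
  calc a^a ≤ a^a * a.factorial := Nat.le_mul_of_pos_right _ a.factorial_pos
    _ ≤ (a + a).factorial := pow_mul_fact a a
    _ = (2*a).factorial := by rw [show a + a = 2*a from by omega]

lemma sep_of_forall₂ {p n : ℕ} : ∀ {l' : List (Perm (Fin p))} {l : List (Perm (Fin n))},
    List.Forall₂ (fun a b => IsPattern a b) l' l → (∀ τ ∈ l, Separable τ) →
    ∀ τ' ∈ l', Separable τ' := by
  intro l' l h
  induction h with
  | nil => intro _ τ' h'; simp at h'
  | @cons a b l₁ l₂ hab htail ihtail =>
    intro hsep τ' hmem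
    rcases List.mem_cons.mp hmem with rfl | hm
    · exact separable_of_isPattern (hsep _ List.mem_cons_self) hab
    · exact ihtail (fun τ hτ => hsep τ (List.mem_cons_of_mem _ hτ)) τ' hm

/-- For every `c ≥ 1` there is a permutation `π` such that every permutation that is a
product of at most `c` separable permutations avoids `π` as a pattern. -/
theorem product_of_separables_avoids_some_pattern (c : ℕ) (hc : 1 ≤ c) :
    ∃ (p : ℕ) (π : Equiv.Perm (Fin p)),
      ∀ (n : ℕ) (σ : Equiv.Perm (Fin n)) (l : List (Equiv.Perm (Fin n))),
        l.length ≤ c → (∀ τ ∈ l, Separable τ) → l.prod = σ → ¬ IsPattern π σ := by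
  classical
  set a := 32^(2*c) * (c+1) with ha
  set p := 2 * a with hp
  have ha1 : 1 ≤ a := by
    have h1 : 0 < 32^(2*c) := pow_pos (by omega) _
    have h2 : 0 < c + 1 := by omega
    calc 1 = 1 * 1 := by omega
      _ ≤ 32^(2*c) * (c+1) := Nat.mul_le_mul h1 h2
  have hp1 : 1 ≤ p := by omega
  set P : Finset (Perm (Fin p)) := Finset.image
    (fun f : Fin c → {σ : Perm (Fin p) // σ ∈ Sfin p} => (List.ofFn (fun i => (f i).1)).prod)
    Finset.univ with hP
  have hPcard : P.card ≤ (Sfin p).card ^ c := by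
    calc P.card ≤ (Finset.univ : Finset (Fin c → {σ : Perm (Fin p) // σ ∈ Sfin p})).card :=
          Finset.card_image_le
      _ = (Sfin p).card ^ c := by
          rw [Finset.card_univ, Fintype.card_fun, Fintype.card_coe, Fintype.card_fin]
  have hlt : P.card < Fintype.card (Perm (Fin p)) := by
    rw [Fintype.card_perm, Fintype.card_fin]
    calc P.card ≤ (Sfin p).card ^ c := hPcard
      _ ≤ (32^p)^c := Nat.pow_le_pow_left (sep_card_le p hp1) c
      _ = 32^(p*c) := by rw [← pow_mul]
      _ < 32^(p*c) * 2 := by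
          have h32 : 0 < 32^(p*c) := pow_pos (by omega) _
          omega
      _ ≤ 32^(2*c*a) * (c+1)^a := by
          have h1 : p * c = 2*c*a := by rw [hp]; ring
          rw [h1]
          apply Nat.mul_le_mul_left
          calc 2 = 2^1 := rfl
            _ ≤ 2^a := Nat.pow_le_pow_right (by omega) ha1
            _ ≤ (c+1)^a := Nat.pow_le_pow_left (by omega) a
      _ = a^a := by rw [ha, Nat.mul_pow, ← pow_mul]
      _ ≤ (2*a).factorial := pow_self_le_fact a
      _ = p.factorial := by rw [hp]
  have hltcard : P.card < (Finset.univ : Finset (Perm (Fin p))).card := by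
    rw [Finset.card_univ]; exact hlt
  obtain ⟨π, hπu, hπP⟩ : ∃ π ∈ (Finset.univ : Finset (Perm (Fin p))), π ∉ P := by
    by_contra hcon
    push_neg at hcon
    exact absurd (Finset.card_le_card (fun x hx => hcon x hx)) (not_le.mpr hltcard)
  refine ⟨p, π, ?_⟩
  intro n σ l hlen hsepl hprod hpat
  apply hπP
  rw [← hprod] at hpat
  obtain ⟨l', hlen', hprod', hfa⟩ := list_pattern_split l hpat
  have hsep' : ∀ τ' ∈ l', Separable τ' := sep_of_forall₂ hfa hsepl
  set l'' := l' ++ List.replicate (c - l'.length) (1 : Perm (Fin p)) with hl''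
  have hlen'' : l''.length = c := by
    rw [hl'', List.length_append, List.length_replicate]
    omega
  have hsep'' : ∀ τ ∈ l'', Separable τ := by
    intro τ hmem
    rcases List.mem_append.mp hmem with h | h
    · exact hsep' τ h
    · rw [List.eq_of_mem_replicate h]
      exact identity_separable
  have hprod'' : l''.prod = π := by
    rw [hl'', List.prod_append, List.prod_replicate, one_pow, mul_one, hprod']
  rw [hP, Finset.mem_image]
  refine ⟨fun i => ⟨l''.get (Fin.cast hlen''.symm i),
    mem_Sfin.mpr (hsep'' _ (l''.get_mem _))⟩, Finset.mem_univ _, ?_⟩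
  have hofn : List.ofFn (fun i : Fin c => l''.get (Fin.cast hlen''.symm i)) = l'' := by
    apply List.ext_get
    · rw [List.length_ofFn, hlen'']
    · intro i h1 h2
      rw [List.get_ofFn]
      apply congrArg
      apply Fin.ext
      rfl
  rw [hofn, hprod'']


end Final
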